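/- Let S be a real symmetric positive definite p × p matrix with spectral decomposition S = U · L · Uᵀ, where U is orthogonal and L = diag(l₁, …, l_p) with l₁ > … > l_p > 0. Then for every real orthogonal p × p matrix V and every diagonal matrix Γ = diag(γ₁, …, γ_p) with γ₁ ≥ … ≥ γ_p > 0, one has trace(V · Γ⁻¹ · Vᵀ · S) − log(det(Γ⁻¹ · L)) ≥ p, and equality holds when V = U and Γ = L. In other words, over spectral reparameterizations Σ = V Γ Vᵀ, the function (V, Γ) ↦ trace(Σ⁻¹ S) − log det(Σ⁻¹ S) is minimized at V = U, Γ = L. -/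

import Mathlib

open Matrix

/-- Stein's inequality for positive definite matrices:
`p ≤ trace B - log (det B)`. -/
lemma stein_trace_sub_log_det_ge {p : ℕ} {B : Matrix (Fin p) (Fin p) ℝ}
    (hB : B.PosDef) : (p : ℝ) ≤ B.trace - Real.log B.det := by
  have hH : B.IsHermitian := hB.1
  set μ : Fin p → ℝ := hH.eigenvalues with hμ
  have hμpos : ∀ i, 0 < μ i := hB.eigenvalues_pos
  have hstar : (star (hH.eigenvectorUnitary : Matrix (Fin p) (Fin p) ℝ)) *
      (hH.eigenvectorUnitary : Matrix (Fin p) (Fin p) ℝ) = 1 :=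
    Unitary.coe_star_mul_self hH.eigenvectorUnitary
  have htr : B.trace = ∑ i, μ i := by
    conv_lhs => rw [hH.spectral_theorem, Unitary.conjStarAlgAut_apply]
    rw [Matrix.trace_mul_comm, ← Matrix.mul_assoc, hstar, one_mul]
    simp [Matrix.trace_diagonal, hμ]
  have hdet : B.det = ∏ i, μ i := by
    simpa using hH.det_eq_prod_eigenvalues
  have hlog : Real.log B.det = ∑ i, Real.log (μ i) := by
    rw [hdet, Real.log_prod]
    intro i _
    exact (hμpos i).ne'
  rw [htr, hlog, ← Finset.sum_sub_distrib]
  calc (p : ℝ) = ∑ _i : Fin p, (1 : ℝ) := by simp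
    _ ≤ ∑ i, (μ i - Real.log (μ i)) := by
        apply Finset.sum_le_sum
        intro i _
        have := Real.log_le_sub_one_of_pos (hμpos i)
        linarith

/-- Congruence of a positive definite matrix by an invertible matrix is
positive definite. -/
lemma posDef_transpose_mul_mul {p : ℕ} {A M : Matrix (Fin p) (Fin p) ℝ}
    (hA : A.PosDef) (hM : IsUnit M.det) : (Mᵀ * A * M).PosDef := by
  rw [← Matrix.conjTranspose_eq_transpose_of_trivial M]
  refine Matrix.PosDef.of_dotProduct_mulVec_pos ?_ ?_
  · exact Matrix.isHermitian_conjTranspose_mul_mul M hA.1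
  · intro x hx
    have hx' : M *ᵥ x ≠ 0 := by
      intro h
      apply hx
      have := congrArg (fun y => M⁻¹ *ᵥ y) h
      simpa [Matrix.mulVec_mulVec, Matrix.nonsing_inv_mul M hM] using this
    simpa only [star_mulVec, dotProduct_mulVec, Matrix.vecMul_vecMul]
      using hA.dotProduct_mulVec_pos hx'

/-- Over spectral reparameterizations `Σ = V * Γ * Vᵀ`, the Stein log-likelihood
term `trace (V * Γ⁻¹ * Vᵀ * S) - log det (Γ⁻¹ * L)` is at least `p`, and
equality holds at `V = U`, `Γ = L`, where `S = U * L * Uᵀ` is the spectral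
decomposition of the positive definite matrix `S`. -/
theorem stein_loss_spectral_minimized_at_sample_decomposition
    (p : ℕ) (hp : 1 ≤ p)
    (S U : Matrix (Fin p) (Fin p) ℝ) (l : Fin p → ℝ)
    (hS : S.PosDef) (hU : U * Uᵀ = 1)
    (hl : StrictAnti l) (hlpos : ∀ i, 0 < l i)
    (hdecomp : S = U * Matrix.diagonal l * Uᵀ) :
    (∀ (V : Matrix (Fin p) (Fin p) ℝ) (γ : Fin p → ℝ),
      V * Vᵀ = 1 → Antitone γ → (∀ i, 0 < γ i) →
      (p : ℝ) ≤ Matrix.trace (V * (Matrix.diagonal γ)⁻¹ * Vᵀ * S) -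
        Real.log (((Matrix.diagonal γ)⁻¹ * Matrix.diagonal l).det)) ∧
    Matrix.trace (U * (Matrix.diagonal l)⁻¹ * Uᵀ * S) -
        Real.log (((Matrix.diagonal l)⁻¹ * Matrix.diagonal l).det) = (p : ℝ) := by
  have hdetU : U.det * U.det = 1 := by
    have := congrArg Matrix.det hU
    rwa [Matrix.det_mul, Matrix.det_transpose, Matrix.det_one] at this
  constructor
  · intro V γ hV hγa hγpos
    set d : Fin p → ℝ := fun i => (Real.sqrt (γ i))⁻¹ with hd
    set D : Matrix (Fin p) (Fin p) ℝ := Matrix.diagonal d with hDdef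
    have hDD : D * D = (Matrix.diagonal γ)⁻¹ := by
      have h1 : D * D = Matrix.diagonal (fun i => (γ i)⁻¹) := by
        rw [hDdef, Matrix.diagonal_mul_diagonal]
        refine congrArg Matrix.diagonal (funext fun i => ?_)
        show (Real.sqrt (γ i))⁻¹ * (Real.sqrt (γ i))⁻¹ = (γ i)⁻¹
        rw [← mul_inv, Real.mul_self_sqrt (hγpos i).le]
      rw [h1]
      refine (Matrix.inv_eq_right_inv ?_).symm
      rw [Matrix.diagonal_mul_diagonal, ← Matrix.diagonal_one]
      exact congrArg Matrix.diagonal (funext fun i => mul_inv_cancel₀ (hγpos i).ne')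
    set B : Matrix (Fin p) (Fin p) ℝ := D * (Vᵀ * S * V) * D with hBdef
    have hdetV : V.det * V.det = 1 := by
      have := congrArg Matrix.det hV
      rwa [Matrix.det_mul, Matrix.det_transpose, Matrix.det_one] at this
    have hVSV : (Vᵀ * S * V).PosDef := by
      have : IsUnit V.det := IsUnit.of_mul_eq_one _ hdetV
      exact posDef_transpose_mul_mul hS this
    have hBpos : B.PosDef := by
      rw [hBdef]
      have hDt : D = Dᵀ := by rw [hDdef, Matrix.diagonal_transpose]
      rw [hDt]
      nth_rewrite 2 [← hDt]
      apply posDef_transpose_mul_mul hVSV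
      rw [hDdef, Matrix.det_diagonal]
      refine isUnit_iff_ne_zero.mpr (Finset.prod_ne_zero_iff.mpr fun i _ => ?_)
      exact inv_ne_zero (Real.sqrt_pos.mpr (hγpos i)).ne'
    have htr : Matrix.trace (V * (Matrix.diagonal γ)⁻¹ * Vᵀ * S) = B.trace := by
      rw [← hDD]
      calc Matrix.trace (V * (D * D) * Vᵀ * S)
          = Matrix.trace ((V * D) * (D * Vᵀ * S)) := by
            simp only [Matrix.mul_assoc]
        _ = Matrix.trace ((D * Vᵀ * S) * (V * D)) := Matrix.trace_mul_comm _ _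
        _ = B.trace := by rw [hBdef]; simp only [Matrix.mul_assoc]
    have hdetB : ((Matrix.diagonal γ)⁻¹ * Matrix.diagonal l).det = B.det := by
      rw [← hDD, hBdef, hdecomp]
      simp only [Matrix.det_mul, Matrix.det_transpose]
      linear_combination (-(D.det * D.det * (Matrix.diagonal l).det)) * hdetU +
        (-(D.det * D.det * (Matrix.diagonal l).det * U.det * U.det)) * hdetV
    rw [htr, hdetB]
    exact stein_trace_sub_log_det_ge hBpos
  · have hUtU : Uᵀ * U = 1 := mul_eq_one_comm.mp hU
    have hLunit : IsUnit (Matrix.diagonal l).det := by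
      rw [Matrix.det_diagonal]
      exact isUnit_iff_ne_zero.mpr
        (Finset.prod_ne_zero_iff.mpr fun i _ => (hlpos i).ne')
    have hLinv : (Matrix.diagonal l)⁻¹ * Matrix.diagonal l = 1 :=
      Matrix.nonsing_inv_mul _ hLunit
    have hmain : U * (Matrix.diagonal l)⁻¹ * Uᵀ * S = 1 := by
      rw [hdecomp]
      calc U * (Matrix.diagonal l)⁻¹ * Uᵀ * (U * Matrix.diagonal l * Uᵀ)
          = U * (Matrix.diagonal l)⁻¹ * (Uᵀ * U) * Matrix.diagonal l * Uᵀ := by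
            simp only [Matrix.mul_assoc]
        _ = U * ((Matrix.diagonal l)⁻¹ * Matrix.diagonal l) * Uᵀ := by
            rw [hUtU]; simp only [Matrix.mul_one, Matrix.mul_assoc]
        _ = U * Uᵀ := by rw [hLinv, Matrix.mul_one]
        _ = 1 := hU
    rw [hmain, hLinv, Matrix.det_one, Real.log_one, Matrix.trace_one]
    simp
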